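/- With the notation and hypotheses of the isomorphism criterion for admissible graphs (G minimally generated by P₁,…,Pₙ with data D, κ_i, j_i, λ_i; G' an admissible graph generated by P'₁,…,P'ₙ): if conditions (A) and (B) hold for all i ∈ {1,…,n} — namely, for i ∈ D the orbit O(P'_i) is disjoint from G'_{i−1} and P'_i has the same preperiod and eventual period as P_i, and for i ∉ D the orbit O(P'_i) meets G'_{i−1} and g'^{κ_i}(P'_i) = −g'^{λ_i}(P'_{j_i}) — then {P'₁,…,P'ₙ} is a minimal generating set for G'. -/

import Mathlib

noncomputable section

/-- `DD N = Σ_{n ∣ N} μ(N/n)·2^n`. -/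
def DD (N : ℕ) : ℤ := ∑ n ∈ N.divisors, ArithmeticFunction.moebius (N / n) * 2 ^ n

/-- A vertex `p` has exact period `N` under the map `g`. -/
def ExactPeriod {V : Type*} (g : V → V) (N : ℕ) (p : V) : Prop :=
  g^[N] p = p ∧ ∀ k, 0 < k → k < N → g^[k] p ≠ p

/-- `Ō(p) = {±g^k(p) : k ≥ 0}`, where `neg` is the negation map of an admissible graph. -/
def OrbitBar {V : Type*} (g : V → V) (neg : V → V) (p : V) : Set V :=
  {q | ∃ k : ℕ, q = g^[k] p ∨ q = neg (g^[k] p)}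

/-- For a generating list `P : Fin n → V`, `Gset g neg P i` is the admissible subgraph
`G_i` generated by the first `i` generators, i.e. `Ō(P 0) ∪ ⋯ ∪ Ō(P (i-1))`. -/
def Gset {V : Type*} (g neg : V → V) {n : ℕ} (P : Fin n → V) (i : ℕ) : Set V :=
  {q | ∃ j : Fin n, (j : ℕ) < i ∧ q ∈ OrbitBar g neg (P j)}

/-- The vertex `x` has preperiod exactly `M` and eventual period exactly `N` under `g`. -/
def Portrait {V : Type*} (g : V → V) (x : V) (M N : ℕ) : Prop :=
  0 < N ∧ g^[M + N] x = g^[M] x ∧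
  (∀ n, 0 < n → n < N → g^[M + n] x ≠ g^[M] x) ∧
  (∀ m, m < M → ¬ ∃ n, 0 < n ∧ g^[m + n] x = g^[m] x)

section Helpers

variable {V : Type*} [Finite V] {g neg : V → V}

lemma adm_fiber (hneg : ∀ P : V, neg P ≠ P ∧ g (neg P) = g P)
    (hfiber : ∀ y : V, ({p : V | g p = y}).ncard = 0 ∨ ({p : V | g p = y}).ncard = 2)
    {x y : V} (h : g y = g x) : y = x ∨ y = neg x := by
  have hx : x ∈ {p : V | g p = g x} := rfl
  have hnx : neg x ∈ {p : V | g p = g x} := (hneg x).2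
  have hy : y ∈ {p : V | g p = g x} := h
  rcases hfiber (g x) with h0 | h2
  · rw [Set.ncard_eq_zero (Set.toFinite _)] at h0
    rw [h0] at hx; exact absurd hx (Set.notMem_empty x)
  · obtain ⟨a, b, hab, habs⟩ := Set.ncard_eq_two.mp h2
    rw [habs] at hx hnx hy
    have hne : x ≠ neg x := fun h => (hneg x).1 h.symm
    rcases hx with rfl | rfl
    · have hb : neg x = b := by
        rcases hnx with h1 | h1
        · exact absurd h1.symm hne
        · exact h1
      rcases hy with h2 | h2
      · exact Or.inl h2
      · exact Or.inr (h2.trans hb.symm)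
    · have ha : neg x = a := by
        rcases hnx with h1 | h1
        · exact h1
        · exact absurd h1.symm hne
      rcases hy with h2 | h2
      · exact Or.inr (h2.trans ha.symm)
      · exact Or.inl h2

lemma adm_neg_neg (hneg : ∀ P : V, neg P ≠ P ∧ g (neg P) = g P)
    (hfiber : ∀ y : V, ({p : V | g p = y}).ncard = 0 ∨ ({p : V | g p = y}).ncard = 2)
    (x : V) : neg (neg x) = x := by
  rcases adm_fiber hneg hfiber ((hneg (neg x)).2.trans (hneg x).2) with h | h
  · exact h
  · exact absurd h (hneg (neg x)).1

end Helpers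

section Portrait1

variable {V : Type*} [Finite V] {g neg : V → V} {x : V} {M N : ℕ}

lemma port_exists (g : V → V) (x : V) : ∃ M N, Portrait g x M N := by
  classical
  obtain ⟨a, b, hab, heq⟩ := Finite.exists_ne_map_eq_of_infinite (fun n : ℕ => g^[n] x)
  have hstart : ∃ m : ℕ, ∃ k, 0 < k ∧ g^[m + k] x = g^[m] x := by
    rcases hab.lt_or_gt with h | h
    · exact ⟨a, b - a, by omega, by rw [show a + (b - a) = b by omega]; exact heq.symm⟩
    · exact ⟨b, a - b, by omega, by rw [show b + (a - b) = a by omega]; exact heq⟩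
  set M := Nat.find hstart with hM
  obtain ⟨k, hk, hkeq⟩ := Nat.find_spec hstart
  have hper : ∃ k, 0 < k ∧ g^[M + k] x = g^[M] x := ⟨k, hk, hkeq⟩
  refine ⟨M, Nat.find hper, (Nat.find_spec hper).1, (Nat.find_spec hper).2, ?_, ?_⟩
  · intro m hm hm2 heq2
    exact absurd ⟨hm, heq2⟩ (Nat.find_min hper hm2)
  · intro m hm
    exact Nat.find_min hstart hm

lemma port_shift (h : Portrait g x M N) {a : ℕ} (ha : M ≤ a) :
    g^[a + N] x = g^[a] x := by
  have : a + N = (a - M) + (M + N) := by omega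
  rw [this, Function.iterate_add_apply, h.2.1, ← Function.iterate_add_apply,
    show a - M + M = a by omega]

lemma port_norm (h : Portrait g x M N) : ∀ a, M ≤ a → g^[a] x = g^[M + (a - M) % N] x := by
  intro a
  induction a using Nat.strong_induction_on with
  | _ a ih =>
    intro ha
    rcases lt_or_ge (a - M) N with hlt | hge
    · rw [Nat.mod_eq_of_lt hlt, show M + (a - M) = a by omega]
    · have hN := h.1
      have h2 : g^[a] x = g^[a - N] x := by
        conv_lhs => rw [show a = a - N + N by omega]
        exact port_shift h (by omega)
      rw [h2, ih (a - N) (by omega) (by omega)]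
      have e : (a - N - M) % N = (a - M) % N := by
        rw [show a - M = (a - N - M) + N by omega, Nat.add_mod_right]
      rw [e]

lemma port_mod (h : Portrait g x M N) {a b : ℕ} (ha : M ≤ a) (hb : M ≤ b)
    (hmod : (a - M) % N = (b - M) % N) : g^[a] x = g^[b] x := by
  rw [port_norm h a ha, port_norm h b hb, hmod]

lemma port_not_le (h : Portrait g x M N) {a b : ℕ} (hab : a ≠ b) (heq : g^[a] x = g^[b] x) :
    M ≤ a := by
  by_contra ha
  rcases lt_or_ge a b with hl | hl
  · exact h.2.2.2 a (by omega) ⟨b - a, by omega, by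
      rw [show a + (b - a) = b by omega]; exact heq.symm⟩
  · have hba : b < a := by omega
    exact h.2.2.2 b (by omega) ⟨a - b, by omega, by
      rw [show b + (a - b) = a by omega]; exact heq⟩

lemma port_mod_of_eq (h : Portrait g x M N) {a b : ℕ} (ha : M ≤ a) (hb : M ≤ b)
    (heq : g^[a] x = g^[b] x) : (a - M) % N = (b - M) % N := by
  have hN := h.1
  set r := (a - M) % N with hr
  set s := (b - M) % N with hs
  have hrN : r < N := Nat.mod_lt _ hN
  have hsN : s < N := Nat.mod_lt _ hN
  have key : g^[M + r] x = g^[M + s] x := by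
    rw [← port_norm h a ha, ← port_norm h b hb]; exact heq
  rcases lt_trichotomy r s with hlt | he | hgt
  · exfalso
    refine h.2.2.1 (N - s + r) (by omega) (by omega) ?_
    have : g^[N - s] (g^[M + r] x) = g^[N - s] (g^[M + s] x) := by rw [key]
    rw [← Function.iterate_add_apply, ← Function.iterate_add_apply,
      show N - s + (M + s) = M + N by omega, h.2.1,
      show N - s + (M + r) = M + (N - s + r) by omega] at this
    exact this
  · exact he
  · exfalso
    refine h.2.2.1 (N - r + s) (by omega) (by omega) ?_
    have : g^[N - r] (g^[M + s] x) = g^[N - r] (g^[M + r] x) := by rw [key]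
    rw [← Function.iterate_add_apply, ← Function.iterate_add_apply,
      show N - r + (M + r) = M + N by omega, h.2.1,
      show N - r + (M + s) = M + (N - r + s) by omega] at this
    exact this

lemma port_eq_iff (h : Portrait g x M N) {a b : ℕ} :
    g^[a] x = g^[b] x ↔ a = b ∨ (M ≤ a ∧ M ≤ b ∧ (a - M) % N = (b - M) % N) := by
  constructor
  · intro heq
    by_cases hab : a = b
    · exact Or.inl hab
    · have ha : M ≤ a := port_not_le h hab heq
      have hb : M ≤ b := port_not_le h (Ne.symm hab) heq.symm
      exact Or.inr ⟨ha, hb, port_mod_of_eq h ha hb heq⟩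
  · rintro (rfl | ⟨ha, hb, hmod⟩)
    · rfl
    · exact port_mod h ha hb hmod

lemma port_entry (hneg : ∀ P : V, neg P ≠ P ∧ g (neg P) = g P)
    (hfiber : ∀ y : V, ({p : V | g p = y}).ncard = 0 ∨ ({p : V | g p = y}).ncard = 2)
    (h : Portrait g x M N) (hM : 1 ≤ M) :
    g^[M + N - 1] x = neg (g^[M - 1] x) := by
  have hN := h.1
  have hgc : g (g^[M + N - 1] x) = g (g^[M - 1] x) := by
    rw [← Function.iterate_succ_apply' g (M + N - 1) x,
      ← Function.iterate_succ_apply' g (M - 1) x,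
      show (M + N - 1).succ = M + N by omega, show (M - 1).succ = M by omega]
    exact h.2.1
  rcases adm_fiber hneg hfiber hgc with he | he
  · exfalso
    rcases (port_eq_iff h).mp he with h1 | h1
    · omega
    · omega
  · exact he

lemma port_neg_iff (hneg : ∀ P : V, neg P ≠ P ∧ g (neg P) = g P)
    (hfiber : ∀ y : V, ({p : V | g p = y}).ncard = 0 ∨ ({p : V | g p = y}).ncard = 2)
    (h : Portrait g x M N) {a b : ℕ} :
    g^[a] x = neg (g^[b] x) ↔
      (a ≠ b ∧ M ≤ a + 1 ∧ M ≤ b + 1 ∧ (a + 1 - M) % N = (b + 1 - M) % N ∧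
        (a < M ∨ b < M)) := by
  have hN := h.1
  constructor
  · intro heq
    have hab : a ≠ b := by
      rintro rfl
      exact (hneg (g^[a] x)).1 heq.symm
    have hgs : g^[a + 1] x = g^[b + 1] x := by
      rw [Function.iterate_succ_apply', Function.iterate_succ_apply', heq, (hneg _).2]
    rcases (port_eq_iff h).mp hgs with h1 | h1
    · omega
    · refine ⟨hab, h1.1, h1.2.1, h1.2.2, ?_⟩
      by_contra hc
      push_neg at hc
      have : g^[a] x = g^[b] x := by
        refine port_mod h hc.1 hc.2 ?_
        have := h1.2.2
        have e1 : a + 1 - M = (a - M) + 1 := by omega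
        have e2 : b + 1 - M = (b - M) + 1 := by omega
        rw [e1, e2] at this
        have := Nat.ModEq.add_right_cancel' 1 this
        exact this
      rw [this] at heq
      exact (hneg (g^[b] x)).1 heq.symm
  · rintro ⟨hab, ha1, hb1, hmod, hor⟩
    rcases hor with hc | hc
    · -- a = M - 1, so M ≥ 1, b ≥ M
      have haM : a = M - 1 := by omega
      have hM1 : 1 ≤ M := by omega
      have hbM : M ≤ b := by
        by_contra hbc
        have : b = M - 1 := by omega
        omega
      have hbmod : (b - M) % N = (M + N - 1 - M) % N := by
        have e1 : a + 1 - M = 0 := by omega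
        rw [e1] at hmod
        have e2 : b + 1 - M = (b - M) + 1 := by omega
        rw [e2] at hmod
        have e3 : M + N - 1 - M = N - 1 := by omega
        rw [e3]
        have hz : ((b - M) + 1) % N = 0 := by rw [← hmod, Nat.zero_mod]
        have h0 : ((b - M) + 1) % N = (N - 1 + 1) % N := by
          rw [hz, show N - 1 + 1 = N by omega, Nat.mod_self]
        exact Nat.ModEq.add_right_cancel' 1 h0
      have : g^[b] x = g^[M + N - 1] x := port_mod h hbM (by omega) hbmod
      rw [this, haM, port_entry hneg hfiber h hM1]
      exact (adm_neg_neg hneg hfiber _).symm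
    · have hbM : b = M - 1 := by omega
      have hM1 : 1 ≤ M := by omega
      have haM : M ≤ a := by
        by_contra hac
        have : a = M - 1 := by omega
        omega
      have hamod : (a - M) % N = (M + N - 1 - M) % N := by
        have e1 : b + 1 - M = 0 := by omega
        rw [e1] at hmod
        have e2 : a + 1 - M = (a - M) + 1 := by omega
        rw [e2] at hmod
        have e3 : M + N - 1 - M = N - 1 := by omega
        rw [e3]
        have hz : ((a - M) + 1) % N = 0 := by rw [hmod, Nat.zero_mod]
        have h0 : ((a - M) + 1) % N = (N - 1 + 1) % N := by
          rw [hz, show N - 1 + 1 = N by omega, Nat.mod_self]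
        exact Nat.ModEq.add_right_cancel' 1 h0
      have : g^[a] x = g^[M + N - 1] x := port_mod h haM (by omega) hamod
      rw [this, hbM, port_entry hneg hfiber h hM1]

end Portrait1

section Orbit1

variable {V : Type*} [Finite V] {g neg : V → V} {n : ℕ} {P : Fin n → V}

lemma orbitBar_iterate (g neg : V → V) (p : V) (k : ℕ) :
    g^[k] p ∈ OrbitBar g neg p := ⟨k, Or.inl rfl⟩

lemma orbitBar_self (g neg : V → V) (p : V) : p ∈ OrbitBar g neg p :=
  ⟨0, Or.inl rfl⟩

lemma orbitBar_g (hneg : ∀ P : V, neg P ≠ P ∧ g (neg P) = g P) {p x : V}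
    (hx : x ∈ OrbitBar g neg p) : g x ∈ OrbitBar g neg p := by
  obtain ⟨k, hk | hk⟩ := hx
  · exact ⟨k + 1, Or.inl (by rw [hk, ← Function.iterate_succ_apply' g k p])⟩
  · exact ⟨k + 1, Or.inl (by rw [hk, (hneg _).2, ← Function.iterate_succ_apply' g k p])⟩

lemma orbitBar_iter (hneg : ∀ P : V, neg P ≠ P ∧ g (neg P) = g P) {p x : V}
    (hx : x ∈ OrbitBar g neg p) (k : ℕ) : g^[k] x ∈ OrbitBar g neg p := by
  induction k with
  | zero => exact hx
  | succ m ih => rw [Function.iterate_succ_apply']; exact orbitBar_g hneg ih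

lemma orbitBar_neg (hneg : ∀ P : V, neg P ≠ P ∧ g (neg P) = g P)
    (hfiber : ∀ y : V, ({p : V | g p = y}).ncard = 0 ∨ ({p : V | g p = y}).ncard = 2)
    {p x : V} (hx : x ∈ OrbitBar g neg p) : neg x ∈ OrbitBar g neg p := by
  obtain ⟨k, hk | hk⟩ := hx
  · exact ⟨k, Or.inr (by rw [hk])⟩
  · exact ⟨k, Or.inl (by rw [hk, adm_neg_neg hneg hfiber])⟩

lemma orbitBar_trans (hneg : ∀ P : V, neg P ≠ P ∧ g (neg P) = g P)
    (hfiber : ∀ y : V, ({p : V | g p = y}).ncard = 0 ∨ ({p : V | g p = y}).ncard = 2)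
    {p x : V} (hx : x ∈ OrbitBar g neg p) : OrbitBar g neg x ⊆ OrbitBar g neg p := by
  rintro q ⟨k, hq | hq⟩
  · rw [hq]; exact orbitBar_iter hneg hx k
  · rw [hq]; exact orbitBar_neg hneg hfiber (orbitBar_iter hneg hx k)

lemma gset_mono {i i' : ℕ} (h : i ≤ i') : Gset g neg P i ⊆ Gset g neg P i' := by
  rintro q ⟨j, hj, hq⟩; exact ⟨j, lt_of_lt_of_le hj h, hq⟩

lemma orbitBar_subset_gset {j : Fin n} {i : ℕ} (hj : (j : ℕ) < i) :
    OrbitBar g neg (P j) ⊆ Gset g neg P i := fun q hq => ⟨j, hj, hq⟩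

lemma gset_g (hneg : ∀ P : V, neg P ≠ P ∧ g (neg P) = g P) {i : ℕ} {x : V}
    (hx : x ∈ Gset g neg P i) : g x ∈ Gset g neg P i := by
  obtain ⟨j, hj, hq⟩ := hx; exact ⟨j, hj, orbitBar_g hneg hq⟩

lemma gset_iter (hneg : ∀ P : V, neg P ≠ P ∧ g (neg P) = g P) {i : ℕ} {x : V}
    (hx : x ∈ Gset g neg P i) (k : ℕ) : g^[k] x ∈ Gset g neg P i := by
  obtain ⟨j, hj, hq⟩ := hx; exact ⟨j, hj, orbitBar_iter hneg hq k⟩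

lemma gset_neg (hneg : ∀ P : V, neg P ≠ P ∧ g (neg P) = g P)
    (hfiber : ∀ y : V, ({p : V | g p = y}).ncard = 0 ∨ ({p : V | g p = y}).ncard = 2)
    {i : ℕ} {x : V} (hx : x ∈ Gset g neg P i) : neg x ∈ Gset g neg P i := by
  obtain ⟨j, hj, hq⟩ := hx; exact ⟨j, hj, orbitBar_neg hneg hfiber hq⟩

lemma gset_zero : Gset g neg P 0 = ∅ := by
  ext q; simp only [Gset, Set.mem_setOf_eq, Set.mem_empty_iff_false, iff_false]
  rintro ⟨j, hj, -⟩; omega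

lemma mem_gset_succ_iff {jf : Fin n} {i : ℕ} (hjf : (jf : ℕ) = i) {q : V} :
    q ∈ Gset g neg P (i + 1) ↔
      q ∈ Gset g neg P i ∨ q ∈ OrbitBar g neg (P jf) := by
  constructor
  · rintro ⟨j, hj, hq⟩
    rcases lt_or_ge (j : ℕ) i with h | h
    · exact Or.inl ⟨j, h, hq⟩
    · have hji : j = jf := Fin.ext (by omega)
      exact Or.inr (hji ▸ hq)
  · rintro (⟨j, hj, hq⟩ | hq)
    · exact ⟨j, by omega, hq⟩
    · exact ⟨jf, by omega, hq⟩

end Orbit1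

/-- With the notation of the isomorphism criterion for admissible
graphs (`G` minimally generated by `P 0, …, P (n-1)`; `G'` an admissible graph
generated by `P' 0, …, P' (n-1)`): if conditions (A) and (B) hold for every `i` —
namely for `i ∈ D` the orbit `O(P' i)` is disjoint from `G'_{i-1}` and `P' i` has the
same preperiod and eventual period as `P i`, and for `i ∉ D` the orbit `O(P' i)` meets
`G'_{i-1}` and `g'^{κ_i}(P'_i) = −g'^{λ_i}(P'_{j_i})` — then `{P' 0, …, P' (n-1)}` is a
minimal generating set for `G'`. -/
theorem stmt12 (V V' : Type) [Fintype V] [DecidableEq V] [Fintype V'] [DecidableEq V']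
    (g neg : V → V)
    (hneg : ∀ P : V, neg P ≠ P ∧ g (neg P) = g P)
    (hfiber : ∀ y : V, ({p : V | g p = y}).ncard = 0 ∨ ({p : V | g p = y}).ncard = 2)
    (hcycle : ∀ N : ℕ, 2 ≤ N → (({p : V | ExactPeriod g N p}).ncard : ℤ) ≤ DD N)
    (g' neg' : V' → V')
    (hneg' : ∀ P : V', neg' P ≠ P ∧ g' (neg' P) = g' P)
    (hfiber' : ∀ y : V', ({p : V' | g' p = y}).ncard = 0 ∨ ({p : V' | g' p = y}).ncard = 2)
    (hcycle' : ∀ N : ℕ, 2 ≤ N → (({p : V' | ExactPeriod g' N p}).ncard : ℤ) ≤ DD N)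
    (n : ℕ) (P : Fin n → V) (hPinj : Function.Injective P)
    (hPgen : ∀ Q : V, ∃ i : Fin n, Q ∈ OrbitBar g neg (P i))
    (hPmin : ∀ S : Finset V, (∀ Q : V, ∃ p ∈ S, Q ∈ OrbitBar g neg p) → n ≤ S.card)
    (P' : Fin n → V')
    (hP'gen : ∀ Q : V', ∃ i : Fin n, Q ∈ OrbitBar g' neg' (P' i))
    (hAB : ∀ i : Fin n,
        ((∀ k : ℕ, g^[k] (P i) ∉ Gset g neg P (i : ℕ)) →
          (∀ k : ℕ, g'^[k] (P' i) ∉ Gset g' neg' P' (i : ℕ)) ∧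
          (∀ M N : ℕ, Portrait g (P i) M N ↔ Portrait g' (P' i) M N)) ∧
        ((∃ k : ℕ, g^[k] (P i) ∈ Gset g neg P (i : ℕ)) →
          (∃ k : ℕ, g'^[k] (P' i) ∈ Gset g' neg' P' (i : ℕ)) ∧
          (∀ (κ : ℕ) (j : Fin n) (lam : ℕ),
            (g^[κ] (P i) ∈ Gset g neg P (i : ℕ) ∧
              ∀ k, k < κ → g^[k] (P i) ∉ Gset g neg P (i : ℕ)) →
            (g^[κ] (P i) ∈ Gset g neg P ((j : ℕ) + 1) ∧
              g^[κ] (P i) ∉ Gset g neg P (j : ℕ)) →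
            (g^[lam] (P j) = neg (g^[κ] (P i)) ∧
              ∀ l, l < lam → g^[l] (P j) ≠ neg (g^[κ] (P i))) →
            g'^[κ] (P' i) = neg' (g'^[lam] (P' j))))) :
    Function.Injective P' ∧
    ∀ S : Finset V', (∀ Q : V', ∃ p ∈ S, Q ∈ OrbitBar g' neg' p) → n ≤ S.card := by
  classical
  by_cases hV' : Nonempty V'
  case neg =>
    constructor
    · intro a b _
      exact absurd ⟨P' a⟩ hV'
    · intro S _
      have hn0 : n = 0 := by
        by_contra h
        exact hV' ⟨P' ⟨0, Nat.pos_of_ne_zero h⟩⟩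
      omega
  case pos =>
  have nn : ∀ x : V, neg (neg x) = x := adm_neg_neg hneg hfiber
  have nn' : ∀ x : V', neg' (neg' x) = x := adm_neg_neg hneg' hfiber'
  -- redundancy lemma
  have hred : ∀ a b : Fin n, a ≠ b →
      OrbitBar g neg (P a) ⊆ OrbitBar g neg (P b) → False := by
    intro a b hab hsub
    have hgen2 : ∀ Q : V, ∃ p ∈ (Finset.univ.erase a).image P, Q ∈ OrbitBar g neg p := by
      intro Q
      obtain ⟨l, hl⟩ := hPgen Q
      by_cases hla : l = a
      · exact ⟨P b, Finset.mem_image_of_mem P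
          (Finset.mem_erase.mpr ⟨Ne.symm hab, Finset.mem_univ b⟩), hsub (hla ▸ hl)⟩
      · exact ⟨P l, Finset.mem_image_of_mem P
          (Finset.mem_erase.mpr ⟨hla, Finset.mem_univ l⟩), hl⟩
    have hcard := hPmin _ hgen2
    have hc2 : ((Finset.univ.erase a).image P).card = n - 1 := by
      rw [Finset.card_image_of_injective _ hPinj,
        Finset.card_erase_of_mem (Finset.mem_univ a), Finset.card_univ, Fintype.card_fin]
    have hn : 0 < n := a.pos
    omega
  -- a generator is not in the earlier part
  have hself : ∀ i : Fin n, P i ∉ Gset g neg P (i : ℕ) := by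
    rintro i ⟨j, hj, hmem⟩
    have hne : i ≠ j := by
      intro h; rw [h] at hj; omega
    exact hred i j hne (orbitBar_trans hneg hfiber hmem)
  -- main induction: partial isomorphisms
  have main : ∀ i, i ≤ n → ∃ φ : V → V',
      Set.BijOn φ (Gset g neg P i) (Gset g' neg' P' i) ∧
      (∀ x ∈ Gset g neg P i, φ (g x) = g' (φ x)) ∧
      (∀ x ∈ Gset g neg P i, φ (neg x) = neg' (φ x)) ∧
      (∀ j : Fin n, (j : ℕ) < i → φ (P j) = P' j) := by
    intro i
    induction i with
    | zero =>
      intro _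
      refine ⟨fun _ => Classical.arbitrary V', ?_, ?_, ?_, ?_⟩
      · rw [gset_zero, gset_zero]; exact Set.bijOn_empty _
      · intro x hx; rw [gset_zero] at hx; exact absurd hx (Set.notMem_empty x)
      · intro x hx; rw [gset_zero] at hx; exact absurd hx (Set.notMem_empty x)
      · intro j hj; omega
    | succ i IH =>
      intro hin
      obtain ⟨φ, hbij, hgc, hnc, hP⟩ := IH (by omega)
      have hi : i < n := by omega
      set ii : Fin n := ⟨i, hi⟩ with hiidef
      have hgiter : ∀ x ∈ Gset g neg P i, ∀ m, φ (g^[m] x) = g'^[m] (φ x) := by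
        intro x hx m
        induction m with
        | zero => rfl
        | succ m ih =>
          rw [Function.iterate_succ_apply', Function.iterate_succ_apply',
            hgc _ (gset_iter hneg hx m), ih]
      have hPii : P ii ∉ Gset g neg P i := hself ii
      by_cases hD : ∀ k : ℕ, g^[k] (P ii) ∉ Gset g neg P i
      · -- case i ∈ D
        obtain ⟨hD', hport⟩ := (hAB ii).1 hD
        obtain ⟨M, N, hMN⟩ := port_exists g (P ii)
        have hMN' : Portrait g' (P' ii) M N := (hport M N).mp hMN
        have hdis : ∀ z ∈ OrbitBar g neg (P ii), z ∉ Gset g neg P i := by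
          rintro z ⟨k, hk | hk⟩ hz
          · exact hD k (hk ▸ hz)
          · have h2 : g^[k] (P ii) ∈ Gset g neg P i := by
              have h3 := gset_neg hneg hfiber hz
              rw [hk, nn] at h3; exact h3
            exact hD k h2
        have hdis' : ∀ z ∈ OrbitBar g' neg' (P' ii), z ∉ Gset g' neg' P' i := by
          rintro z ⟨k, hk | hk⟩ hz
          · exact hD' k (hk ▸ hz)
          · have h2 : g'^[k] (P' ii) ∈ Gset g' neg' P' i := by
              have h3 := gset_neg hneg' hfiber' hz
              rw [hk, nn'] at h3; exact h3
            exact hD' k h2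
        obtain ⟨φ', hφ'⟩ : ∃ φ' : V → V', ∀ x, φ' x =
            if x ∈ Gset g neg P i then φ x
            else if hx : ∃ k : ℕ, x = g^[k] (P ii) ∨ x = neg (g^[k] (P ii)) then
              (if x = g^[Nat.find hx] (P ii) then g'^[Nat.find hx] (P' ii)
               else neg' (g'^[Nat.find hx] (P' ii)))
            else φ x := ⟨_, fun x => rfl⟩
        have hold : ∀ x ∈ Gset g neg P i, φ' x = φ x := by
          intro x hx; rw [hφ' x, if_pos hx]
        have hW1 : ∀ k : ℕ, φ' (g^[k] (P ii)) = g'^[k] (P' ii) := by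
          intro k
          have hnot : g^[k] (P ii) ∉ Gset g neg P i :=
            hdis _ (orbitBar_iterate g neg (P ii) k)
          have hx : ∃ k' : ℕ, g^[k] (P ii) = g^[k'] (P ii) ∨
              g^[k] (P ii) = neg (g^[k'] (P ii)) := ⟨k, Or.inl rfl⟩
          rw [hφ' _, if_neg hnot, dif_pos hx]
          split_ifs with h1
          · have h2 := (port_eq_iff hMN).mp h1
            exact ((port_eq_iff hMN').mpr h2).symm
          · have hsp := Nat.find_spec hx
            rcases hsp with h2 | h2
            · exact absurd h2 h1
            · have h3 := (port_neg_iff hneg hfiber hMN).mp h2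
              exact ((port_neg_iff hneg' hfiber' hMN').mpr h3).symm
        have hW2 : ∀ k : ℕ, φ' (neg (g^[k] (P ii))) = neg' (g'^[k] (P' ii)) := by
          intro k
          have hnot : neg (g^[k] (P ii)) ∉ Gset g neg P i :=
            hdis _ ⟨k, Or.inr rfl⟩
          have hx : ∃ k' : ℕ, neg (g^[k] (P ii)) = g^[k'] (P ii) ∨
              neg (g^[k] (P ii)) = neg (g^[k'] (P ii)) := ⟨k, Or.inr rfl⟩
          rw [hφ' _, if_neg hnot, dif_pos hx]
          split_ifs with h1
          · have h2 : g^[Nat.find hx] (P ii) = neg (g^[k] (P ii)) := h1.symm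
            have h3 := (port_neg_iff hneg hfiber hMN).mp h2
            exact ((port_neg_iff hneg' hfiber' hMN').mpr h3)
          · have hsp := Nat.find_spec hx
            rcases hsp with h2 | h2
            · exact absurd h2 h1
            · have h2' : g^[k] (P ii) = g^[Nat.find hx] (P ii) := by
                have := congrArg neg h2
                rwa [nn, nn] at this
              have h3 := (port_eq_iff hMN).mp h2'
              have h4 := ((port_eq_iff hMN').mpr h3)
              rw [h4]
        -- properties
        refine ⟨φ', ⟨?_, ?_, ?_⟩, ?_, ?_, ?_⟩
        · -- mapsTo
          intro x hx
          rcases (mem_gset_succ_iff (jf := ii) (i := i) rfl).mp hx with hxo | hxn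
          · rw [hold x hxo]
            exact gset_mono (Nat.le_succ i) (hbij.mapsTo hxo)
          · obtain ⟨k, hk | hk⟩ := hxn
            · rw [hk, hW1 k]
              exact (mem_gset_succ_iff (jf := ii) (i := i) rfl).mpr (Or.inr (orbitBar_iterate g' neg' (P' ii) k))
            · rw [hk, hW2 k]
              exact (mem_gset_succ_iff (jf := ii) (i := i) rfl).mpr (Or.inr ⟨k, Or.inr rfl⟩)
        · -- injOn
          intro x hx y hy heq
          rcases (mem_gset_succ_iff (jf := ii) (i := i) rfl).mp hx with hxo | hxn <;>
            rcases (mem_gset_succ_iff (jf := ii) (i := i) rfl).mp hy with hyo | hyn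
          · rw [hold x hxo, hold y hyo] at heq
            exact hbij.injOn hxo hyo heq
          · exfalso
            obtain ⟨k, hk | hk⟩ := hyn
            · rw [hold x hxo, hk, hW1 k] at heq
              exact hdis' _ (orbitBar_iterate g' neg' (P' ii) k) (heq ▸ hbij.mapsTo hxo)
            · rw [hold x hxo, hk, hW2 k] at heq
              exact hdis' _ ⟨k, Or.inr rfl⟩ (heq ▸ hbij.mapsTo hxo)
          · exfalso
            obtain ⟨k, hk | hk⟩ := hxn
            · rw [hold y hyo, hk, hW1 k] at heq
              exact hdis' _ (orbitBar_iterate g' neg' (P' ii) k) (heq ▸ hbij.mapsTo hyo)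
            · rw [hold y hyo, hk, hW2 k] at heq
              exact hdis' _ ⟨k, Or.inr rfl⟩ (heq ▸ hbij.mapsTo hyo)
          · obtain ⟨k, hk | hk⟩ := hxn <;> obtain ⟨l, hl | hl⟩ := hyn <;>
              rw [hk, hl] at heq ⊢
            · rw [hW1 k, hW1 l] at heq
              exact (port_eq_iff hMN).mpr ((port_eq_iff hMN').mp heq)
            · rw [hW1 k, hW2 l] at heq
              exact (port_neg_iff hneg hfiber hMN).mpr
                ((port_neg_iff hneg' hfiber' hMN').mp heq)
            · rw [hW2 k, hW1 l] at heq
              exact ((port_neg_iff hneg hfiber hMN).mpr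
                ((port_neg_iff hneg' hfiber' hMN').mp heq.symm)).symm
            · rw [hW2 k, hW2 l] at heq
              have h2 : g'^[k] (P' ii) = g'^[l] (P' ii) := by
                have h3 := congrArg neg' heq
                rwa [nn', nn'] at h3
              rw [(port_eq_iff hMN).mpr ((port_eq_iff hMN').mp h2)]
        · -- surjOn
          intro y hy
          rcases (mem_gset_succ_iff (jf := ii) (i := i) rfl).mp hy with hyo | hyn
          · obtain ⟨x, hx, hφx⟩ := hbij.surjOn hyo
            exact ⟨x, gset_mono (Nat.le_succ i) hx, by rw [hold x hx]; exact hφx⟩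
          · obtain ⟨k, hk | hk⟩ := hyn
            · refine ⟨g^[k] (P ii), (mem_gset_succ_iff (jf := ii) (i := i) rfl).mpr
                (Or.inr (orbitBar_iterate g neg (P ii) k)), ?_⟩
              rw [hW1 k, hk]
            · refine ⟨neg (g^[k] (P ii)), (mem_gset_succ_iff (jf := ii) (i := i) rfl).mpr
                (Or.inr ⟨k, Or.inr rfl⟩), ?_⟩
              rw [hW2 k, hk]
        · -- g-commutation
          intro x hx
          rcases (mem_gset_succ_iff (jf := ii) (i := i) rfl).mp hx with hxo | hxn
          · rw [hold x hxo, hold (g x) (gset_g hneg hxo)]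
            exact hgc x hxo
          · obtain ⟨k, hk | hk⟩ := hxn
            · rw [hk, hW1 k, ← Function.iterate_succ_apply' g k (P ii), hW1 (k + 1),
                Function.iterate_succ_apply' g' k (P' ii)]
            · rw [hk, hW2 k, (hneg _).2, ← Function.iterate_succ_apply' g k (P ii),
                hW1 (k + 1), Function.iterate_succ_apply' g' k (P' ii), (hneg' _).2]
        · -- neg-commutation
          intro x hx
          rcases (mem_gset_succ_iff (jf := ii) (i := i) rfl).mp hx with hxo | hxn
          · rw [hold x hxo, hold (neg x) (gset_neg hneg hfiber hxo)]
            exact hnc x hxo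
          · obtain ⟨k, hk | hk⟩ := hxn
            · rw [hk, hW1 k, hW2 k]
            · rw [hk, hW2 k, nn, hW1 k, nn']
        · -- generators
          intro j hj
          rcases Nat.lt_or_ge (j : ℕ) i with h | h
          · rw [hold (P j) (orbitBar_subset_gset h (orbitBar_self g neg (P j)))]
            exact hP j h
          · have hji : j = ii := by
              apply Fin.ext
              show (j : ℕ) = i
              omega
            subst hji
            have h0 := hW1 0
            rwa [Function.iterate_zero_apply, Function.iterate_zero_apply] at h0
      · -- case i ∉ D
        push_neg at hD
        obtain ⟨hEx', hBB⟩ := (hAB ii).2 hD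
        have hκmem : g^[Nat.find hD] (P ii) ∈ Gset g neg P i := Nat.find_spec hD
        set κ := Nat.find hD with hκdef
        have hκmin : ∀ k, k < κ → g^[k] (P ii) ∉ Gset g neg P i := by
          intro k hk
          exact Nat.find_min hD hk
        have hκpos : 0 < κ := by
          rcases Nat.eq_zero_or_pos κ with h0 | h0
          · exfalso
            apply hPii
            have := hκmem
            rw [h0, Function.iterate_zero_apply] at this
            exact this
          · exact h0
        -- construct the attaching index j
        obtain ⟨j1, hj1lt, hj1mem⟩ := id hκmem
        have hjex : ∃ m : ℕ, g^[κ] (P ii) ∈ Gset g neg P (m + 1) :=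
          ⟨(j1 : ℕ), ⟨j1, Nat.lt_succ_self _, hj1mem⟩⟩
        have hm₀mem : g^[κ] (P ii) ∈ Gset g neg P (Nat.find hjex + 1) := Nat.find_spec hjex
        set m₀ := Nat.find hjex with hm₀def
        have hm₀le : m₀ ≤ (j1 : ℕ) := Nat.find_min' hjex ⟨j1, Nat.lt_succ_self _, hj1mem⟩
        have hm₀lt : m₀ < i := by omega
        have hm₀n : m₀ < n := by omega
        set jj : Fin n := ⟨m₀, hm₀n⟩ with hjjdef
        have hnotm₀ : g^[κ] (P ii) ∉ Gset g neg P m₀ := by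
          intro hmem
          obtain ⟨j2, hj2, hj2m⟩ := hmem
          rcases Nat.eq_zero_or_pos m₀ with h0 | h0
          · omega
          · exact Nat.find_min hjex (m := m₀ - 1) (by omega)
              ⟨j2, by omega, hj2m⟩
        have horbj : g^[κ] (P ii) ∈ OrbitBar g neg (P jj) := by
          obtain ⟨j2, hj2, hj2m⟩ := hm₀mem
          have hj2e : j2 = jj := by
            apply Fin.ext
            show (j2 : ℕ) = m₀
            by_contra hne
            exact hnotm₀ ⟨j2, by omega, hj2m⟩
          exact hj2e ▸ hj2m
        have hjlti : (jj : ℕ) < i := hm₀lt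
        have hjne : jj ≠ ii := by
          intro h
          have : (jj : ℕ) = (ii : ℕ) := by rw [h]
          have h2 : m₀ = i := this
          omega
        have hPjmem : P jj ∈ Gset g neg P i :=
          orbitBar_subset_gset hjlti (orbitBar_self g neg (P jj))
        -- existence of lam
        have hlamex : ∃ l : ℕ, g^[l] (P jj) = neg (g^[κ] (P ii)) := by
          obtain ⟨l, hl | hl⟩ := horbj
          · rcases Nat.eq_zero_or_pos l with rfl | hlpos
            · exfalso
              rw [Function.iterate_zero_apply] at hl
              have hPjj : P jj ∈ OrbitBar g neg (P ii) :=
                hl ▸ orbitBar_iterate g neg (P ii) κ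
              exact hred jj ii hjne (orbitBar_trans hneg hfiber hPjj)
            · exfalso
              have hfib : g (g^[κ - 1] (P ii)) = g (g^[l - 1] (P jj)) := by
                rw [← Function.iterate_succ_apply' g (κ - 1) (P ii),
                  ← Function.iterate_succ_apply' g (l - 1) (P jj),
                  show (κ - 1).succ = κ by omega, show (l - 1).succ = l by omega]
                exact hl
              rcases adm_fiber hneg hfiber hfib.symm with he | he
              · refine hκmin (κ - 1) (by omega) ?_
                rw [← he]
                exact orbitBar_subset_gset hjlti (orbitBar_iterate g neg (P jj) (l - 1))
              · refine hκmin (κ - 1) (by omega) ?_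
                have h3 := congrArg neg he
                rw [nn] at h3
                rw [← h3]
                exact gset_neg hneg hfiber (orbitBar_subset_gset hjlti
                  (orbitBar_iterate g neg (P jj) (l - 1)))
          · exact ⟨l, by rw [hl, nn]⟩
        have hlam : g^[Nat.find hlamex] (P jj) = neg (g^[κ] (P ii)) := Nat.find_spec hlamex
        set lam := Nat.find hlamex with hlamdef
        have hlammin : ∀ l, l < lam → g^[l] (P jj) ≠ neg (g^[κ] (P ii)) := by
          intro l hl
          exact Nat.find_min hlamex hl
        have hattach : neg (g^[lam] (P jj)) = g^[κ] (P ii) := by rw [hlam, nn]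
        have E' : g'^[κ] (P' ii) = neg' (g'^[lam] (P' jj)) :=
          hBB κ jj lam ⟨hκmem, hκmin⟩ ⟨hm₀mem, hnotm₀⟩ ⟨hlam, hlammin⟩
        -- primed facts
        have hφPj : ∀ m : ℕ, φ (g^[m] (P jj)) = g'^[m] (P' jj) := by
          intro m
          rw [hgiter (P jj) hPjmem m, hP jj hjlti]
        have hκmem' : g'^[κ] (P' ii) ∈ Gset g' neg' P' i := by
          rw [E']
          exact gset_neg hneg' hfiber' (gset_iter hneg'
            (orbitBar_subset_gset hjlti (orbitBar_self g' neg' (P' jj))) lam)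
        have hc' : ∀ t, t < κ → g'^[t] (P' ii) ∉ Gset g' neg' P' i := by
          intro t ht hmem
          obtain ⟨w, hw, hφw⟩ := hbij.surjOn hmem
          have h1 : φ (g^[κ - t] w) = g'^[κ] (P' ii) := by
            rw [hgiter w hw (κ - t), hφw, ← Function.iterate_add_apply,
              show κ - t + t = κ by omega]
          have h2 : φ (neg (g^[lam] (P jj))) = g'^[κ] (P' ii) := by
            rw [hnc _ (gset_iter hneg hPjmem lam), hφPj lam, ← E']
          have h3 : g^[κ - t] w = neg (g^[lam] (P jj)) :=
            hbij.injOn (gset_iter hneg hw (κ - t))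
              (gset_neg hneg hfiber (gset_iter hneg hPjmem lam)) (h1.trans h2.symm)
          have h4 : g^[κ - t] w = g^[κ] (P ii) := by rw [h3, hattach]
          have h5 : g (g^[κ - t - 1] w) = g (g^[κ - 1] (P ii)) := by
            rw [← Function.iterate_succ_apply' g (κ - t - 1) w,
              ← Function.iterate_succ_apply' g (κ - 1) (P ii),
              show (κ - t - 1).succ = κ - t by omega, show (κ - 1).succ = κ by omega]
            exact h4
          rcases adm_fiber hneg hfiber h5.symm with he | he
          · exact hκmin (κ - 1) (by omega) (he ▸ gset_iter hneg hw (κ - t - 1))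
          · exact hκmin (κ - 1) (by omega)
              (he ▸ gset_neg hneg hfiber (gset_iter hneg hw (κ - t - 1)))
        have hd' : ∀ a b, a < b → b ≤ κ → a < κ →
            g'^[a] (P' ii) ≠ g'^[b] (P' ii) := by
          intro a b hab hbκ haκ heq2
          have h1 : g'^[κ - b + a] (P' ii) = g'^[κ] (P' ii) := by
            rw [Function.iterate_add_apply, heq2, ← Function.iterate_add_apply,
              show κ - b + b = κ by omega]
          exact hc' (κ - b + a) (by omega) (h1 ▸ hκmem')
        have hdneg' : ∀ a b, a < κ → b < κ →
            g'^[a] (P' ii) ≠ neg' (g'^[b] (P' ii)) := by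
          intro a b ha hb heq2
          by_cases hab : a = b
          · subst hab
            exact (hneg' _).1 heq2.symm
          · have h2 : g'^[a + 1] (P' ii) = g'^[b + 1] (P' ii) := by
              rw [Function.iterate_succ_apply' g' a, Function.iterate_succ_apply' g' b,
                heq2, (hneg' _).2]
            rcases Nat.lt_or_ge a b with h | h
            · exact hd' (a + 1) (b + 1) (by omega) (by omega) (by omega) h2
            · exact hd' (b + 1) (a + 1) (by omega) (by omega) (by omega) h2.symm
        -- unprimed versions
        have hκmemU : g^[κ] (P ii) ∈ Gset g neg P i := hκmem
        have hdU : ∀ a b, a < b → b ≤ κ → a < κ →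
            g^[a] (P ii) ≠ g^[b] (P ii) := by
          intro a b hab hbκ haκ heq2
          have h1 : g^[κ - b + a] (P ii) = g^[κ] (P ii) := by
            rw [Function.iterate_add_apply, heq2, ← Function.iterate_add_apply,
              show κ - b + b = κ by omega]
          exact hκmin (κ - b + a) (by omega) (h1 ▸ hκmemU)
        have hdnegU : ∀ a b, a < κ → b < κ →
            g^[a] (P ii) ≠ neg (g^[b] (P ii)) := by
          intro a b ha hb heq2
          by_cases hab : a = b
          · subst hab
            exact (hneg _).1 heq2.symm
          · have h2 : g^[a + 1] (P ii) = g^[b + 1] (P ii) := by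
              rw [Function.iterate_succ_apply' g a, Function.iterate_succ_apply' g b,
                heq2, (hneg _).2]
            rcases Nat.lt_or_ge a b with h | h
            · exact hdU (a + 1) (b + 1) (by omega) (by omega) (by omega) h2
            · exact hdU (b + 1) (a + 1) (by omega) (by omega) (by omega) h2.symm
        have hrepκ : ∀ k, κ ≤ k → g^[k] (P ii) ∈ Gset g neg P i := by
          intro k hk
          have h1 : g^[k] (P ii) = g^[k - κ] (g^[κ] (P ii)) := by
            rw [← Function.iterate_add_apply, show k - κ + κ = k by omega]
          rw [h1]
          exact gset_iter hneg hκmemU (k - κ)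
        have hrepκ' : ∀ k, κ ≤ k → g'^[k] (P' ii) ∈ Gset g' neg' P' i := by
          intro k hk
          have h1 : g'^[k] (P' ii) = g'^[k - κ] (g'^[κ] (P' ii)) := by
            rw [← Function.iterate_add_apply, show k - κ + κ = k by omega]
          rw [h1]
          exact gset_iter hneg' hκmem' (k - κ)
        -- definition of the extension
        obtain ⟨φ', hφ'⟩ : ∃ φ' : V → V', ∀ x, φ' x =
            if x ∈ Gset g neg P i then φ x
            else if hx : ∃ k : ℕ, x = g^[k] (P ii) ∨ x = neg (g^[k] (P ii)) then
              (if x = g^[Nat.find hx] (P ii) then g'^[Nat.find hx] (P' ii)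
               else neg' (g'^[Nat.find hx] (P' ii)))
            else φ x := ⟨_, fun x => rfl⟩
        have hold : ∀ x ∈ Gset g neg P i, φ' x = φ x := by
          intro x hx; rw [hφ' x, if_pos hx]
        have hnotmem : ∀ k, k < κ → neg (g^[k] (P ii)) ∉ Gset g neg P i := by
          intro k hk hmem
          have h2 := gset_neg hneg hfiber hmem
          rw [nn] at h2
          exact hκmin k hk h2
        have hnotmem' : ∀ k, k < κ → neg' (g'^[k] (P' ii)) ∉ Gset g' neg' P' i := by
          intro k hk hmem
          have h2 := gset_neg hneg' hfiber' hmem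
          rw [nn'] at h2
          exact hc' k hk h2
        have hW1 : ∀ k, k < κ → φ' (g^[k] (P ii)) = g'^[k] (P' ii) := by
          intro k hk
          have hx : ∃ k' : ℕ, g^[k] (P ii) = g^[k'] (P ii) ∨
              g^[k] (P ii) = neg (g^[k'] (P ii)) := ⟨k, Or.inl rfl⟩
          have hk₀ : Nat.find hx ≤ k := Nat.find_min' hx (Or.inl rfl)
          rw [hφ' _, if_neg (hκmin k hk), dif_pos hx]
          split_ifs with h1
          · have hkk : Nat.find hx = k := by
              by_contra hne
              exact hdU (Nat.find hx) k (by omega) (by omega) (by omega) h1.symm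
            rw [hkk]
          · rcases Nat.find_spec hx with h2 | h2
            · exact absurd h2 h1
            · exact absurd h2 (hdnegU k (Nat.find hx) hk (by omega))
        have hW2 : ∀ k, k < κ → φ' (neg (g^[k] (P ii))) = neg' (g'^[k] (P' ii)) := by
          intro k hk
          have hx : ∃ k' : ℕ, neg (g^[k] (P ii)) = g^[k'] (P ii) ∨
              neg (g^[k] (P ii)) = neg (g^[k'] (P ii)) := ⟨k, Or.inr rfl⟩
          have hk₀ : Nat.find hx ≤ k := Nat.find_min' hx (Or.inr rfl)
          rw [hφ' _, if_neg (hnotmem k hk), dif_pos hx]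
          split_ifs with h1
          · exact absurd h1.symm (hdnegU (Nat.find hx) k (by omega) hk)
          · rcases Nat.find_spec hx with h2 | h2
            · exact absurd h2 h1
            · have h3 : g^[k] (P ii) = g^[Nat.find hx] (P ii) := by
                have h4 := congrArg neg h2
                rwa [nn, nn] at h4
              have hkk : Nat.find hx = k := by
                by_contra hne
                exact hdU (Nat.find hx) k (by omega) (by omega) (by omega) h3.symm
              rw [hkk]
        have hnew : ∀ x, x ∈ Gset g neg P (i + 1) → x ∉ Gset g neg P i →
            ∃ k, k < κ ∧ (x = g^[k] (P ii) ∨ x = neg (g^[k] (P ii))) := by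
          intro x hx hxn
          rcases (mem_gset_succ_iff (jf := ii) (i := i) rfl).mp hx with h | h
          · exact absurd h hxn
          · obtain ⟨k, hk | hk⟩ := h
            · rcases Nat.lt_or_ge k κ with hlt | hge
              · exact ⟨k, hlt, Or.inl hk⟩
              · exact absurd (hk ▸ hrepκ k hge) hxn
            · rcases Nat.lt_or_ge k κ with hlt | hge
              · exact ⟨k, hlt, Or.inr hk⟩
              · exact absurd (hk ▸ gset_neg hneg hfiber (hrepκ k hge)) hxn
        refine ⟨φ', ⟨?_, ?_, ?_⟩, ?_, ?_, ?_⟩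
        · -- mapsTo
          intro x hx
          by_cases hxo : x ∈ Gset g neg P i
          · rw [hold x hxo]
            exact gset_mono (Nat.le_succ i) (hbij.mapsTo hxo)
          · obtain ⟨k, hkκ, hk | hk⟩ := hnew x hx hxo
            · rw [hk, hW1 k hkκ]
              exact (mem_gset_succ_iff (jf := ii) (i := i) rfl).mpr
                (Or.inr (orbitBar_iterate g' neg' (P' ii) k))
            · rw [hk, hW2 k hkκ]
              exact (mem_gset_succ_iff (jf := ii) (i := i) rfl).mpr
                (Or.inr ⟨k, Or.inr rfl⟩)
        · -- injOn
          intro x hx y hy heq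
          by_cases hxo : x ∈ Gset g neg P i <;> by_cases hyo : y ∈ Gset g neg P i
          · rw [hold x hxo, hold y hyo] at heq
            exact hbij.injOn hxo hyo heq
          · exfalso
            obtain ⟨l, hlκ, hl | hl⟩ := hnew y hy hyo
            · rw [hold x hxo, hl, hW1 l hlκ] at heq
              exact hc' l hlκ (heq ▸ hbij.mapsTo hxo)
            · rw [hold x hxo, hl, hW2 l hlκ] at heq
              exact hnotmem' l hlκ (heq ▸ hbij.mapsTo hxo)
          · exfalso
            obtain ⟨k, hkκ, hk | hk⟩ := hnew x hx hxo
            · rw [hold y hyo, hk, hW1 k hkκ] at heq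
              exact hc' k hkκ (heq ▸ hbij.mapsTo hyo)
            · rw [hold y hyo, hk, hW2 k hkκ] at heq
              exact hnotmem' k hkκ (heq ▸ hbij.mapsTo hyo)
          · obtain ⟨k, hkκ, hk | hk⟩ := hnew x hx hxo <;>
              obtain ⟨l, hlκ, hl | hl⟩ := hnew y hy hyo <;>
              rw [hk, hl] at heq ⊢
            · rw [hW1 k hkκ, hW1 l hlκ] at heq
              have hkk : k = l := by
                by_contra hne
                rcases Nat.lt_or_ge k l with h | h
                · exact hd' k l h (by omega) hkκ heq
                · exact hd' l k (by omega) (by omega) hlκ heq.symm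
              rw [hkk]
            · rw [hW1 k hkκ, hW2 l hlκ] at heq
              exact absurd heq (hdneg' k l hkκ hlκ)
            · rw [hW2 k hkκ, hW1 l hlκ] at heq
              exact absurd heq.symm (hdneg' l k hlκ hkκ)
            · rw [hW2 k hkκ, hW2 l hlκ] at heq
              have h2 : g'^[k] (P' ii) = g'^[l] (P' ii) := by
                have h3 := congrArg neg' heq
                rwa [nn', nn'] at h3
              have hkk : k = l := by
                by_contra hne
                rcases Nat.lt_or_ge k l with h | h
                · exact hd' k l h (by omega) hkκ h2
                · exact hd' l k (by omega) (by omega) hlκ h2.symm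
              rw [hkk]
        · -- surjOn
          intro y hy
          rcases (mem_gset_succ_iff (jf := ii) (i := i) rfl).mp hy with hyo | hyn
          · obtain ⟨x, hx, hφx⟩ := hbij.surjOn hyo
            exact ⟨x, gset_mono (Nat.le_succ i) hx, by rw [hold x hx]; exact hφx⟩
          · obtain ⟨k, hk | hk⟩ := hyn
            · rcases Nat.lt_or_ge k κ with hlt | hge
              · refine ⟨g^[k] (P ii), (mem_gset_succ_iff (jf := ii) (i := i) rfl).mpr
                  (Or.inr (orbitBar_iterate g neg (P ii) k)), ?_⟩
                rw [hW1 k hlt, hk]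
              · obtain ⟨x, hx, hφx⟩ := hbij.surjOn (hk ▸ hrepκ' k hge)
                exact ⟨x, gset_mono (Nat.le_succ i) hx, by rw [hold x hx]; exact hφx⟩
            · rcases Nat.lt_or_ge k κ with hlt | hge
              · refine ⟨neg (g^[k] (P ii)), (mem_gset_succ_iff (jf := ii) (i := i) rfl).mpr
                  (Or.inr ⟨k, Or.inr rfl⟩), ?_⟩
                rw [hW2 k hlt, hk]
              · have hmem2 : y ∈ Gset g' neg' P' i :=
                  hk ▸ gset_neg hneg' hfiber' (hrepκ' k hge)
                obtain ⟨x, hx, hφx⟩ := hbij.surjOn hmem2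
                exact ⟨x, gset_mono (Nat.le_succ i) hx, by rw [hold x hx]; exact hφx⟩
        · -- g-commutation
          intro x hx
          by_cases hxo : x ∈ Gset g neg P i
          · rw [hold x hxo, hold (g x) (gset_g hneg hxo)]
            exact hgc x hxo
          · obtain ⟨k, hkκ, hk | hk⟩ := hnew x hx hxo
            · subst hk
              rw [← Function.iterate_succ_apply' g k (P ii)]
              rcases Nat.lt_or_ge (k + 1) κ with hlt | hge
              · rw [hW1 k hkκ, hW1 (k + 1) hlt,
                  Function.iterate_succ_apply' g' k (P' ii)]
              · have hk1 : k + 1 = κ := by omega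
                have hmem3 : g^[k + 1] (P ii) ∈ Gset g neg P i := by
                  rw [hk1]; exact hκmemU
                rw [hW1 k hkκ, hold _ hmem3]
                have h2 : φ (g^[k + 1] (P ii)) = g'^[κ] (P' ii) := by
                  rw [hk1, ← hattach, hnc _ (gset_iter hneg hPjmem lam), hφPj lam, ← E']
                rw [h2, ← hk1, Function.iterate_succ_apply' g' k (P' ii)]
            · subst hk
              rw [(hneg _).2, ← Function.iterate_succ_apply' g k (P ii),
                hW2 k hkκ, (hneg' _).2]
              rcases Nat.lt_or_ge (k + 1) κ with hlt | hge
              · rw [hW1 (k + 1) hlt, Function.iterate_succ_apply' g' k (P' ii)]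
              · have hk1 : k + 1 = κ := by omega
                have hmem3 : g^[k + 1] (P ii) ∈ Gset g neg P i := by
                  rw [hk1]; exact hκmemU
                rw [hold _ hmem3]
                have h2 : φ (g^[k + 1] (P ii)) = g'^[κ] (P' ii) := by
                  rw [hk1, ← hattach, hnc _ (gset_iter hneg hPjmem lam), hφPj lam, ← E']
                rw [h2, ← hk1, Function.iterate_succ_apply' g' k (P' ii)]
        · -- neg-commutation
          intro x hx
          by_cases hxo : x ∈ Gset g neg P i
          · rw [hold x hxo, hold (neg x) (gset_neg hneg hfiber hxo)]
            exact hnc x hxo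
          · obtain ⟨k, hkκ, hk | hk⟩ := hnew x hx hxo
            · rw [hk, hW1 k hkκ, hW2 k hkκ]
            · rw [hk, hW2 k hkκ, nn, hW1 k hkκ, nn']
        · -- generators
          intro j hj
          rcases Nat.lt_or_ge (j : ℕ) i with h | h
          · rw [hold (P j) (orbitBar_subset_gset h (orbitBar_self g neg (P j)))]
            exact hP j h
          · have hji : j = ii := by
              apply Fin.ext
              show (j : ℕ) = i
              omega
            subst hji
            have h0 := hW1 0 hκpos
            rwa [Function.iterate_zero_apply, Function.iterate_zero_apply] at h0
  obtain ⟨φ, hbij, hgc, hnc, hP⟩ := main n le_rfl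
  have hVuniv : Gset g neg P n = Set.univ :=
    Set.eq_univ_of_forall (fun Q => (hPgen Q).elim (fun j hj => ⟨j, j.isLt, hj⟩))
  have hV'univ : Gset g' neg' P' n = Set.univ :=
    Set.eq_univ_of_forall (fun Q => (hP'gen Q).elim (fun j hj => ⟨j, j.isLt, hj⟩))
  rw [hVuniv, hV'univ] at hbij
  have hφbij : Function.Bijective φ := Set.bijOn_univ.mp hbij
  have hgcA : ∀ x : V, φ (g x) = g' (φ x) := fun x =>
    hgc x (by rw [hVuniv]; exact Set.mem_univ x)
  have hncA : ∀ x : V, φ (neg x) = neg' (φ x) := fun x =>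
    hnc x (by rw [hVuniv]; exact Set.mem_univ x)
  have hPA : ∀ j : Fin n, φ (P j) = P' j := fun j => hP j j.isLt
  have hgiterA : ∀ (x : V) (k : ℕ), φ (g^[k] x) = g'^[k] (φ x) := by
    intro x k
    induction k with
    | zero => rfl
    | succ m ih =>
      rw [Function.iterate_succ_apply', Function.iterate_succ_apply', hgcA, ih]
  set e := Equiv.ofBijective φ hφbij with hedef
  have heφ : ∀ x : V, e x = φ x := fun x => rfl
  constructor
  · intro a b hab
    apply hPinj
    apply hφbij.1
    rw [hPA a, hPA b, hab]
  · intro S hS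
    have hgen : ∀ Q : V, ∃ p ∈ S.image e.symm, Q ∈ OrbitBar g neg p := by
      intro Q
      obtain ⟨p, hpS, k, hk⟩ := hS (φ Q)
      refine ⟨e.symm p, Finset.mem_image_of_mem _ hpS, k, ?_⟩
      have hps : φ (e.symm p) = p := by
        rw [← heφ]
        exact e.apply_symm_apply p
      rcases hk with hk | hk
      · left
        apply hφbij.1
        rw [hgiterA, hps, hk]
      · right
        apply hφbij.1
        rw [hncA, hgiterA, hps, hk]
    calc n ≤ (S.image e.symm).card := hPmin _ hgen
      _ ≤ S.card := Finset.card_image_le
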